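/- Let $a>-1$ and let $\widetilde u$ be the degenerate heat kernel. For every $x\in\mathbb{R}$ and $t>0$, the total mass identity $\int_{-\infty}^{\infty}\widetilde u(x,y,t)\,|y|^a\,dy = 1$ holds. -/

import Mathlib

noncomputable section
open Real

/-- The Bessel-type profile `F(z)` with `ν = (a-1)/2`:
`F(z) = e^{-z/2} ( ∑_k (z/4)^{2k}/(k! Γ(k+ν+1)) + (z/4)|z/4|^{-a} ∑_k (z/4)^{2k}/(k! Γ(k-ν+1)) )`. -/
def Fker (a z : ℝ) : ℝ :=
  Real.exp (-z / 2) *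
    ((∑' k : ℕ, (z / 4) ^ (2 * k) / ((Nat.factorial k : ℝ) * Real.Gamma ((k : ℝ) + (a - 1) / 2 + 1))) +
      z / 4 * |z / 4| ^ (-a) *
        ∑' k : ℕ, (z / 4) ^ (2 * k) / ((Nat.factorial k : ℝ) * Real.Gamma ((k : ℝ) - (a - 1) / 2 + 1)))

/-- The one-dimensional degenerate heat kernel
`ũ(x,y,t) = (4t)^{-(a+1)/2} e^{-(x-y)²/(4t)} F(xy/t)`. -/
def utilde (a x y t : ℝ) : ℝ :=
  (4 * t) ^ (-(a + 1) / 2) * Real.exp (-(x - y) ^ 2 / (4 * t)) * Fker a (x * y / t)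

open MeasureTheory


open Set

section AuxLemmas


lemma fact_mul_Gamma_le (c : ℝ) (hc : 1 ≤ c) : ∀ m : ℕ, (m.factorial : ℝ) * Real.Gamma c ≤ Real.Gamma (m + c)
  | 0 => by simp
  | (m + 1) => by
      have hm := fact_mul_Gamma_le c hc m
      have hm0 : (0:ℝ) ≤ (m:ℝ) := Nat.cast_nonneg m
      have hpos : (0:ℝ) < (m:ℝ) + c := by linarith
      have h1 : Real.Gamma (((m+1 : ℕ) : ℝ) + c) = ((m:ℝ) + c) * Real.Gamma ((m:ℝ) + c) := by
        have h2 : ((m+1 : ℕ) : ℝ) + c = ((m:ℝ) + c) + 1 := by push_cast; ring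
        rw [h2, Real.Gamma_add_one (ne_of_gt hpos)]
      have hG : 0 < Real.Gamma ((m:ℝ) + c) := Real.Gamma_pos_of_pos hpos
      have h3 : (((m+1).factorial : ℕ) : ℝ) = ((m:ℝ)+1) * (m.factorial : ℝ) := by
        push_cast [Nat.factorial_succ]; ring
      rw [h1, h3, mul_assoc]
      calc ((m:ℝ)+1) * ((m.factorial : ℝ) * Real.Gamma c)
          ≤ ((m:ℝ)+1) * Real.Gamma ((m:ℝ) + c) := by
            exact mul_le_mul_of_nonneg_left hm (by linarith)
        _ ≤ ((m:ℝ) + c) * Real.Gamma ((m:ℝ) + c) := by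
            exact mul_le_mul_of_nonneg_right (by linarith) hG.le

lemma summable_div_abs_gamma (r c : ℝ) (hr : 0 ≤ r) :
    Summable (fun k : ℕ => r ^ k / |Real.Gamma ((k : ℝ) + c)|) := by
  obtain ⟨K, hK⟩ := exists_nat_ge (1 - c)
  have hKc : 1 ≤ (K : ℝ) + c := by linarith
  rw [← summable_nat_add_iff K]
  have hGpos : 0 < Real.Gamma ((K:ℝ) + c) := Real.Gamma_pos_of_pos (by linarith)
  refine Summable.of_nonneg_of_le (fun m => by positivity)
    (g := fun m => r ^ (m + K) / |Real.Gamma (((m + K : ℕ) : ℝ) + c)|)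
    (f := fun m => (r ^ K / Real.Gamma ((K:ℝ)+c)) * (r ^ m / (m.factorial : ℝ))) ?_ ?_
  · intro m
    have hle : (m.factorial : ℝ) * Real.Gamma ((K:ℝ)+c) ≤ Real.Gamma (((m + K : ℕ) : ℝ) + c) := by
      have h := fact_mul_Gamma_le ((K:ℝ)+c) hKc m
      have : (m:ℝ) + ((K:ℝ) + c) = ((m + K : ℕ) : ℝ) + c := by push_cast; ring
      rwa [this] at h
    have hf : (0:ℝ) < (m.factorial : ℝ) := by exact_mod_cast m.factorial_pos
    have hGpos2 : 0 < Real.Gamma (((m + K : ℕ) : ℝ) + c) := lt_of_lt_of_le (by positivity) hle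
    rw [abs_of_pos hGpos2]
    calc r ^ (m + K) / Real.Gamma (((m + K : ℕ) : ℝ) + c)
        ≤ r ^ (m + K) / ((m.factorial : ℝ) * Real.Gamma ((K:ℝ)+c)) := by
          gcongr
      _ = (r ^ K / Real.Gamma ((K:ℝ)+c)) * (r ^ m / (m.factorial : ℝ)) := by
          rw [pow_add]; field_simp
  · exact (Real.summable_pow_div_factorial r).mul_left _

lemma summable_ser (u c : ℝ) :
    Summable (fun k : ℕ => u ^ (2*k) / ((k.factorial : ℝ) * Real.Gamma ((k:ℝ) + c))) := by
  refine Summable.of_abs ?_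
  refine Summable.of_nonneg_of_le (fun k => abs_nonneg _) ?_
    (summable_div_abs_gamma (u^2) c (sq_nonneg u))
  intro k
  have h1 : |u ^ (2*k) / ((k.factorial : ℝ) * Real.Gamma ((k:ℝ) + c))|
      = (u^2) ^ k / ((k.factorial : ℝ) * |Real.Gamma ((k:ℝ) + c)|) := by
    rw [abs_div, abs_mul, Nat.abs_cast, pow_mul, abs_of_nonneg (pow_nonneg (sq_nonneg u) k)]
  rw [h1]
  rcases eq_or_ne (Real.Gamma ((k:ℝ) + c)) 0 with h | h
  · simp [h]
  · have habs : 0 < |Real.Gamma ((k:ℝ) + c)| := abs_pos.mpr h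
    have hf : (1:ℝ) ≤ (k.factorial : ℝ) := by exact_mod_cast k.factorial_pos
    calc (u^2) ^ k / ((k.factorial : ℝ) * |Real.Gamma ((k:ℝ) + c)|)
        ≤ (u^2) ^ k / (1 * |Real.Gamma ((k:ℝ) + c)|) := by
          gcongr
      _ = (u^2) ^ k / |Real.Gamma ((k:ℝ) + c)| := by rw [one_mul]



lemma integrable_abs_rpow_gauss {b : ℝ} (hb : 0 < b) {s : ℝ} (hs : -1 < s) :
    Integrable fun x : ℝ => |x| ^ s * Real.exp (-b * x ^ 2) := by
  have base : IntegrableOn (fun x : ℝ => x ^ s * Real.exp (-b * x ^ 2)) (Ioi 0) :=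
    integrableOn_rpow_mul_exp_neg_mul_sq hb hs
  have heq : IntegrableOn (fun x : ℝ => |x| ^ s * Real.exp (-b * x ^ 2)) (Ioi 0) := by
    refine base.congr_fun (fun x hx => ?_) measurableSet_Ioi
    rw [abs_of_pos hx]
  rw [← integrableOn_univ, ← @Iio_union_Ici _ _ (0 : ℝ), integrableOn_union,
    integrableOn_Ici_iff_integrableOn_Ioi]
  refine ⟨?_, heq⟩
  rw [← (Measure.measurePreserving_neg (volume : Measure ℝ)).integrableOn_comp_preimage
      (Homeomorph.neg ℝ).measurableEmbedding]
  simp only [Function.comp_def, neg_sq, neg_preimage, neg_Iio, neg_neg, neg_zero, abs_neg]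
  exact heq

lemma gauss_moment {b : ℝ} (hb : 0 < b) {p : ℝ} (hp : -1 < p) :
    Integrable (fun y : ℝ => |y| ^ p * Real.exp (-y^2/b)) ∧
    ∫ y : ℝ, |y| ^ p * Real.exp (-y^2/b) = b ^ ((p+1)/2) * Real.Gamma ((p+1)/2) := by
  have h1b : (0:ℝ) < 1/b := by positivity
  have heq : (fun y : ℝ => |y| ^ p * Real.exp (-y^2/b))
      = fun y : ℝ => |y| ^ p * Real.exp (-(1/b) * y^2) := by
    funext y; rw [show -y^2/b = -(1/b)*y^2 by ring]
  constructor
  · rw [heq]; exact integrable_abs_rpow_gauss h1b hp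
  · rw [heq]
    have h0 : (fun y : ℝ => |y| ^ p * Real.exp (-(1/b) * y ^ 2))
        = fun y : ℝ => (fun u : ℝ => u ^ p * Real.exp (-(1/b) * u^2)) |y| := by
      funext y; simp only [sq_abs]
    rw [h0, integral_comp_abs (f := fun u : ℝ => u ^ p * Real.exp (-(1/b) * u^2))]
    have h2 := integral_rpow_mul_exp_neg_mul_rpow (p := 2) (q := p) (b := 1/b) two_pos hp h1b
    rw [show (2:ℝ) = ((2:ℕ):ℝ) by norm_num] at h2
    simp_rw [Real.rpow_natCast] at h2
    push_cast at h2
    rw [h2]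
    have h3 : (1/b) ^ (-(p+1)/2) = b ^ ((p+1)/2) := by
      rw [one_div, Real.inv_rpow hb.le, neg_div, Real.rpow_neg hb.le, inv_inv]
    rw [h3]; ring



lemma ae_ne_zero' : ∀ᵐ y : ℝ, y ≠ 0 := by
  rw [MeasureTheory.ae_iff]
  simp only [ne_eq, not_not]
  rw [show {y : ℝ | y = 0} = {0} from Set.setOf_eq_eq_singleton]
  exact measure_singleton 0

lemma psi1_eq_ae {b a : ℝ} (k : ℕ) :
    (fun y : ℝ => |y| ^ (2*(k:ℝ)+a) * Real.exp (-y^2/b))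
      =ᵐ[volume] (fun y : ℝ => y^(2*k) * |y|^a * Real.exp (-y^2/b)) := by
  filter_upwards [ae_ne_zero'] with y hy
  rw [show (2*(k:ℝ)+a) = ((2*k:ℕ):ℝ) + a by push_cast; ring,
    Real.rpow_add (abs_pos.mpr hy), Real.rpow_natCast, Even.pow_abs (even_two_mul k)]

lemma psi1_integrable {b : ℝ} (hb : 0 < b) {a : ℝ} (ha : -1 < a) (k : ℕ) :
    Integrable (fun y : ℝ => y^(2*k) * |y|^a * Real.exp (-y^2/b)) := by
  have hk : (0:ℝ) ≤ (k:ℝ) := Nat.cast_nonneg k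
  have hp : -1 < 2*(k:ℝ) + a := by linarith
  exact ((gauss_moment hb hp).1).congr (psi1_eq_ae k)

lemma psi1_integral {b : ℝ} (hb : 0 < b) {a : ℝ} (ha : -1 < a) (k : ℕ) :
    ∫ y : ℝ, y^(2*k) * |y|^a * Real.exp (-y^2/b)
      = b ^ ((k:ℝ) + ((a-1)/2 + 1)) * Real.Gamma ((k:ℝ) + ((a-1)/2 + 1)) := by
  have hk : (0:ℝ) ≤ (k:ℝ) := Nat.cast_nonneg k
  have hp : -1 < 2*(k:ℝ) + a := by linarith
  rw [← integral_congr_ae (psi1_eq_ae (b := b) (a := a) k), (gauss_moment hb hp).2,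
    show (2*(k:ℝ)+a+1)/2 = (k:ℝ) + ((a-1)/2+1) from by ring]

lemma psi2_integrable {b : ℝ} (hb : 0 < b) (k : ℕ) :
    Integrable (fun y : ℝ => y^(2*k+1) * Real.exp (-y^2/b)) := by
  have hp : (-1:ℝ) < ((2*k+1:ℕ):ℝ) := by
    have := Nat.cast_nonneg (α := ℝ) (2*k+1); linarith
  refine ((gauss_moment hb hp).1).mono' (Continuous.aestronglyMeasurable (by fun_prop)) ?_
  refine Filter.Eventually.of_forall fun y => le_of_eq ?_
  rw [Real.norm_eq_abs, abs_mul, abs_pow, abs_of_pos (Real.exp_pos _), Real.rpow_natCast]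

lemma psi2_integral_zero {b : ℝ} (k : ℕ) :
    ∫ y : ℝ, y^(2*k+1) * Real.exp (-y^2/b) = 0 := by
  have h := integral_neg_eq_self (fun y : ℝ => y^(2*k+1) * Real.exp (-y^2/b)) volume
  simp only [Odd.neg_pow (odd_two_mul_add_one k), neg_sq, neg_mul] at h
  rw [integral_neg] at h
  linarith

lemma psi2_norm_integral {b : ℝ} (hb : 0 < b) (k : ℕ) :
    ∫ y : ℝ, |y| ^ ((2*k+1:ℕ):ℝ) * Real.exp (-y^2/b) = b^(k+1) * (k.factorial : ℝ) := by
  have hp : (-1:ℝ) < ((2*k+1:ℕ):ℝ) := by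
    have := Nat.cast_nonneg (α := ℝ) (2*k+1); linarith
  rw [(gauss_moment hb hp).2, show (((2*k+1:ℕ):ℝ)+1)/2 = ((k:ℝ)+1) from by push_cast; ring,
    Real.Gamma_nat_eq_factorial, show ((k:ℝ)+1) = ((k+1:ℕ):ℝ) from by push_cast; ring,
    Real.rpow_natCast]



def phiAux (a x t : ℝ) (k : ℕ) (y : ℝ) : ℝ :=
  (4*t) ^ (-(a+1)/2) * (Real.exp (-x^2/(4*t)) * Real.exp (-y^2/(4*t))) *
    ((x*y/(4*t))^(2*k) / ((k.factorial : ℝ) * Real.Gamma ((k:ℝ) + ((a-1)/2 + 1))) * |y|^a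
     + (x*y/(4*t))^(2*k) / ((k.factorial : ℝ) * Real.Gamma ((k:ℝ) + (1 - (a-1)/2)))
        * (x/(4*t) * |x/(4*t)| ^ (-a) * y))

def A1c (a x t : ℝ) (k : ℕ) : ℝ :=
  (4*t)^(-(a+1)/2) * Real.exp (-x^2/(4*t)) * (x/(4*t))^(2*k)
    / ((k.factorial:ℝ) * Real.Gamma ((k:ℝ) + ((a-1)/2+1)))

def A2c (a x t : ℝ) (k : ℕ) : ℝ :=
  (4*t)^(-(a+1)/2) * Real.exp (-x^2/(4*t)) * (x/(4*t) * |x/(4*t)|^(-a)) * (x/(4*t))^(2*k)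
    / ((k.factorial:ℝ) * Real.Gamma ((k:ℝ) + (1-(a-1)/2)))

lemma phi_split (a x t : ℝ) (k : ℕ) : phiAux a x t k = fun y =>
    A1c a x t k * (y^(2*k) * |y|^a * Real.exp (-y^2/(4*t)))
    + A2c a x t k * (y^(2*k+1) * Real.exp (-y^2/(4*t))) := by
  funext y; unfold phiAux A1c A2c; ring

lemma phi_meas (a x t : ℝ) (k : ℕ) : AEStronglyMeasurable (phiAux a x t k) volume := by
  rw [phi_split]
  exact Measurable.aestronglyMeasurable (by fun_prop)

lemma Gamma1_pos {a : ℝ} (ha : -1 < a) (k : ℕ) :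
    0 < Real.Gamma ((k:ℝ) + ((a-1)/2+1)) := by
  have hk : (0:ℝ) ≤ (k:ℝ) := Nat.cast_nonneg k
  exact Real.Gamma_pos_of_pos (by linarith)

lemma A1_mul {a x t : ℝ} (ha : -1 < a) (ht : 0 < t) (k : ℕ) :
    A1c a x t k * ((4*t) ^ ((k:ℝ) + ((a-1)/2+1)) * Real.Gamma ((k:ℝ)+((a-1)/2+1)))
      = Real.exp (-x^2/(4*t)) * ((x^2/(4*t))^k / (k.factorial:ℝ)) := by
  have hb : (0:ℝ) < 4*t := by linarith
  have hΓ := Gamma1_pos ha k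
  have hkf : ((k.factorial:ℝ)) ≠ 0 := by exact_mod_cast k.factorial_ne_zero
  have hbpow : (4*t) ^ ((k:ℝ) + ((a-1)/2+1)) = (4*t)^(k:ℕ) * (4*t)^((a+1)/2) := by
    rw [show (k:ℝ) + ((a-1)/2+1) = (k:ℝ) + (a+1)/2 from by ring, Real.rpow_add hb,
      Real.rpow_natCast]
  have hcancel : (4*t)^(-(a+1)/2) * (4*t)^((a+1)/2) = 1 := by
    rw [← Real.rpow_add hb, show -(a+1)/2 + (a+1)/2 = 0 from by ring, Real.rpow_zero]
  have hpowk : (x/(4*t))^(2*k) * (4*t)^k = (x^2/(4*t))^k := by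
    have h4 : (4*t) ≠ 0 := hb.ne'
    rw [pow_mul, ← mul_pow, div_pow, div_mul_eq_mul_div, pow_two (4*t), mul_div_mul_right _ _ h4]
  have hgc : Real.Gamma ((k:ℝ)+((a-1)/2+1)) / ((k.factorial:ℝ) * Real.Gamma ((k:ℝ)+((a-1)/2+1)))
      = 1 / (k.factorial:ℝ) := by
    rw [div_eq_div_iff (mul_ne_zero hkf hΓ.ne') hkf]; ring
  calc A1c a x t k * ((4*t) ^ ((k:ℝ) + ((a-1)/2+1)) * Real.Gamma ((k:ℝ)+((a-1)/2+1)))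
      = ((4*t)^(-(a+1)/2) * (4*t)^((a+1)/2)) * (((x/(4*t))^(2*k) * (4*t)^k)
          * (Real.exp (-x^2/(4*t)) * (Real.Gamma ((k:ℝ)+((a-1)/2+1))
              / ((k.factorial:ℝ) * Real.Gamma ((k:ℝ)+((a-1)/2+1)))))) := by
        rw [hbpow]; unfold A1c; ring
    _ = 1 * ((x^2/(4*t))^k * (Real.exp (-x^2/(4*t)) * (1 / (k.factorial:ℝ)))) := by
        rw [hcancel, hpowk, hgc]
    _ = _ := by ring

lemma phi_integral {a x t : ℝ} (ha : -1 < a) (ht : 0 < t) (k : ℕ) :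
    ∫ y : ℝ, phiAux a x t k y
      = Real.exp (-x^2/(4*t)) * ((x^2/(4*t))^k / (k.factorial:ℝ)) := by
  have hb : (0:ℝ) < 4*t := by linarith
  rw [phi_split]
  rw [integral_add ((psi1_integrable hb ha k).const_mul _) ((psi2_integrable hb k).const_mul _),
    integral_const_mul, integral_const_mul, psi1_integral hb ha k, psi2_integral_zero,
    mul_zero, add_zero]
  exact A1_mul ha ht k

lemma phi_tsum_integral {a x t : ℝ} (ha : -1 < a) (ht : 0 < t) :
    ∑' k : ℕ, ∫ y : ℝ, phiAux a x t k y = 1 := by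
  rw [tsum_congr (fun k => phi_integral ha ht k), tsum_mul_left]
  have h : ∑' k : ℕ, (x^2/(4*t))^k / (k.factorial:ℝ) = Real.exp (x^2/(4*t)) := by
    rw [Real.exp_eq_exp_ℝ, NormedSpace.exp_eq_tsum_div]
  rw [h, ← Real.exp_add, show -x^2/(4*t) + x^2/(4*t) = 0 from by ring, Real.exp_zero]

lemma A1_nonneg {a x t : ℝ} (ha : -1 < a) (ht : 0 < t) (k : ℕ) : 0 ≤ A1c a x t k := by
  unfold A1c
  apply div_nonneg
  · apply mul_nonneg (mul_nonneg (Real.rpow_nonneg (by linarith) _) (Real.exp_pos _).le)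
    rw [← Even.pow_abs (even_two_mul k)]
    positivity
  · exact mul_nonneg (Nat.cast_nonneg _) (Gamma1_pos ha k).le

lemma A2abs_mul {a x t : ℝ} (ht : 0 < t) (k : ℕ) :
    |A2c a x t k| * ((4*t)^(k+1) * (k.factorial:ℝ))
      = ((4*t)^(-(a+1)/2) * Real.exp (-x^2/(4*t)) * (|x/(4*t)| * |(|x/(4*t)|) ^ (-a)|) * (4*t))
          * ((x^2/(4*t))^k / |Real.Gamma ((k:ℝ)+(1-(a-1)/2))|) := by
  have hb : (0:ℝ) < 4*t := by linarith
  have hkf : ((k.factorial:ℝ)) ≠ 0 := by exact_mod_cast k.factorial_ne_zero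
  have hpowk : (x/(4*t))^(2*k) * (4*t)^k = (x^2/(4*t))^k := by
    have h4 : (4*t) ≠ 0 := hb.ne'
    rw [pow_mul, ← mul_pow, div_pow, div_mul_eq_mul_div, pow_two (4*t), mul_div_mul_right _ _ h4]
  have habs : |A2c a x t k| = (4*t)^(-(a+1)/2) * Real.exp (-x^2/(4*t))
      * (|x/(4*t)| * |(|x/(4*t)|) ^ (-a)|) * (x/(4*t))^(2*k)
      / ((k.factorial:ℝ) * |Real.Gamma ((k:ℝ)+(1-(a-1)/2))|) := by
    unfold A2c
    simp only [abs_div, abs_mul, Nat.abs_cast]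
    rw [abs_of_nonneg (Real.rpow_nonneg hb.le _), abs_of_pos (Real.exp_pos _),
      abs_pow (x/(4*t)), Even.pow_abs (even_two_mul k)]
  rcases eq_or_ne (Real.Gamma ((k:ℝ)+(1-(a-1)/2))) 0 with h | h
  · rw [habs, h]
    simp
  · have habs0 : |Real.Gamma ((k:ℝ)+(1-(a-1)/2))| ≠ 0 := abs_ne_zero.mpr h
    have hgc : (k.factorial:ℝ) / ((k.factorial:ℝ) * |Real.Gamma ((k:ℝ)+(1-(a-1)/2))|)
        = 1 / |Real.Gamma ((k:ℝ)+(1-(a-1)/2))| := by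
      rw [div_eq_div_iff (mul_ne_zero hkf habs0) habs0]; ring
    have hpow2 : (x/(4*t))^(2*k) * (4*t)^(k+1) = (4*t) * (x^2/(4*t))^k := by
      rw [pow_succ]
      calc (x/(4*t))^(2*k) * ((4*t)^k * (4*t))
          = ((x/(4*t))^(2*k) * (4*t)^k) * (4*t) := by ring
        _ = (x^2/(4*t))^k * (4*t) := by rw [hpowk]
        _ = _ := by ring
    calc |A2c a x t k| * ((4*t)^(k+1) * (k.factorial:ℝ))
        = ((4*t)^(-(a+1)/2) * Real.exp (-x^2/(4*t)) * (|x/(4*t)| * |(|x/(4*t)|) ^ (-a)|))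
            * (((x/(4*t))^(2*k) * (4*t)^(k+1))
              * ((k.factorial:ℝ) / ((k.factorial:ℝ) * |Real.Gamma ((k:ℝ)+(1-(a-1)/2))|))) := by
          rw [habs]; ring
      _ = ((4*t)^(-(a+1)/2) * Real.exp (-x^2/(4*t)) * (|x/(4*t)| * |(|x/(4*t)|) ^ (-a)|))
            * (((4*t) * (x^2/(4*t))^k) * (1 / |Real.Gamma ((k:ℝ)+(1-(a-1)/2))|)) := by
          rw [hpow2, hgc]
      _ = _ := by ring

lemma bound_summable {a x t : ℝ} (ha : -1 < a) (ht : 0 < t) :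
    Summable (fun k : ℕ =>
      |A1c a x t k| * ((4*t) ^ ((k:ℝ) + ((a-1)/2+1)) * Real.Gamma ((k:ℝ)+((a-1)/2+1)))
      + |A2c a x t k| * ((4*t)^(k+1) * (k.factorial:ℝ))) := by
  have hb : (0:ℝ) < 4*t := by linarith
  apply Summable.add
  · have heq : (fun k : ℕ => |A1c a x t k| * ((4*t) ^ ((k:ℝ) + ((a-1)/2+1))
        * Real.Gamma ((k:ℝ)+((a-1)/2+1))))
        = fun k : ℕ => Real.exp (-x^2/(4*t)) * ((x^2/(4*t))^k / (k.factorial:ℝ)) := by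
      funext k
      rw [abs_of_nonneg (A1_nonneg ha ht k), A1_mul ha ht k]
    rw [heq]
    exact (Real.summable_pow_div_factorial (x^2/(4*t))).mul_left _
  · have heq : (fun k : ℕ => |A2c a x t k| * ((4*t)^(k+1) * (k.factorial:ℝ)))
        = fun k : ℕ => ((4*t)^(-(a+1)/2) * Real.exp (-x^2/(4*t))
            * (|x/(4*t)| * |(|x/(4*t)|) ^ (-a)|) * (4*t))
          * ((x^2/(4*t))^k / |Real.Gamma ((k:ℝ)+(1-(a-1)/2))|) := by
      funext k; exact A2abs_mul ht k
    rw [heq]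
    exact (summable_div_abs_gamma (x^2/(4*t)) (1-(a-1)/2) (by positivity)).mul_left _

lemma phi_lintegral_le {a x t : ℝ} (ha : -1 < a) (ht : 0 < t) (k : ℕ) :
    ∫⁻ y : ℝ, ‖phiAux a x t k y‖₊ ≤ ENNReal.ofReal
      (|A1c a x t k| * ((4*t) ^ ((k:ℝ) + ((a-1)/2+1)) * Real.Gamma ((k:ℝ)+((a-1)/2+1)))
       + |A2c a x t k| * ((4*t)^(k+1) * (k.factorial:ℝ))) := by
  have hb : (0:ℝ) < 4*t := by linarith
  have hp2 : (-1:ℝ) < ((2*k+1:ℕ):ℝ) := by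
    have := Nat.cast_nonneg (α := ℝ) (2*k+1); linarith
  set g : ℝ → ℝ := fun y => |A1c a x t k| * (y^(2*k) * |y|^a * Real.exp (-y^2/(4*t)))
      + |A2c a x t k| * (|y| ^ ((2*k+1:ℕ):ℝ) * Real.exp (-y^2/(4*t))) with hg
  have hgint : Integrable g := by
    exact ((psi1_integrable hb ha k).const_mul _).add (((gauss_moment hb hp2).1).const_mul _)
  have hpsi1nn : ∀ y : ℝ, 0 ≤ y^(2*k) * |y|^a * Real.exp (-y^2/(4*t)) := by
    intro y
    apply mul_nonneg (mul_nonneg ?_ (Real.rpow_nonneg (abs_nonneg y) a)) (Real.exp_pos _).le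
    rw [← Even.pow_abs (even_two_mul k)]; positivity
  have hgnn : 0 ≤ᵐ[volume] g := by
    refine Filter.Eventually.of_forall fun y => ?_
    apply add_nonneg (mul_nonneg (abs_nonneg _) (hpsi1nn y))
    apply mul_nonneg (abs_nonneg _)
    positivity
  have hnorm : ∀ y : ℝ, ‖phiAux a x t k y‖ ≤ g y := by
    intro y
    rw [phi_split]
    refine (norm_add_le _ _).trans ?_
    rw [hg]
    simp only [norm_mul, Real.norm_eq_abs]
    apply add_le_add
    · apply le_of_eq
      congr 1
      rw [abs_of_nonneg (show (0:ℝ) ≤ y^(2*k) from by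
          rw [← Even.pow_abs (even_two_mul k)]; positivity),
        abs_of_nonneg (Real.rpow_nonneg (abs_nonneg y) a), abs_of_pos (Real.exp_pos _)]
    · apply le_of_eq
      rw [abs_pow, abs_of_pos (Real.exp_pos _), Real.rpow_natCast]
  calc ∫⁻ y : ℝ, ‖phiAux a x t k y‖₊
      = ∫⁻ y : ℝ, ENNReal.ofReal ‖phiAux a x t k y‖ := by
        simp_rw [ofReal_norm, enorm_eq_nnnorm]
    _ ≤ ∫⁻ y : ℝ, ENNReal.ofReal (g y) :=
        lintegral_mono fun y => ENNReal.ofReal_le_ofReal (hnorm y)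
    _ = ENNReal.ofReal (∫ y : ℝ, g y) := (ofReal_integral_eq_lintegral_ofReal hgint hgnn).symm
    _ = ENNReal.ofReal
        (|A1c a x t k| * ((4*t) ^ ((k:ℝ) + ((a-1)/2+1)) * Real.Gamma ((k:ℝ)+((a-1)/2+1)))
         + |A2c a x t k| * ((4*t)^(k+1) * (k.factorial:ℝ))) := by
        rw [hg, integral_add ((psi1_integrable hb ha k).const_mul _)
            (((gauss_moment hb hp2).1).const_mul _), integral_const_mul, integral_const_mul,
          psi1_integral hb ha k, psi2_norm_integral hb k]

lemma phi_lintegral_ne_top {a x t : ℝ} (ha : -1 < a) (ht : 0 < t) :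
    ∑' k : ℕ, ∫⁻ y : ℝ, ‖phiAux a x t k y‖₊ ≠ ⊤ := by
  have hb : (0:ℝ) < 4*t := by linarith
  have hnn : ∀ k : ℕ, 0 ≤
      |A1c a x t k| * ((4*t) ^ ((k:ℝ) + ((a-1)/2+1)) * Real.Gamma ((k:ℝ)+((a-1)/2+1)))
      + |A2c a x t k| * ((4*t)^(k+1) * (k.factorial:ℝ)) := by
    intro k
    apply add_nonneg
    · exact mul_nonneg (abs_nonneg _)
        (mul_nonneg (Real.rpow_nonneg hb.le _) (Gamma1_pos ha k).le)
    · exact mul_nonneg (abs_nonneg _) (by positivity)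
  refine ne_top_of_le_ne_top ?_ (ENNReal.tsum_le_tsum (fun k => phi_lintegral_le ha ht k))
  rw [← ENNReal.ofReal_tsum_of_nonneg hnn (bound_summable ha ht)]
  exact ENNReal.ofReal_ne_top

lemma phi_pointwise {a x t : ℝ} (ha : -1 < a) (ht : 0 < t) {y : ℝ} (hy : y ≠ 0) :
    utilde a x y t * |y|^a = ∑' k : ℕ, phiAux a x t k y := by
  have ht' : t ≠ 0 := ne_of_gt ht
  have hb : (0:ℝ) < 4*t := by linarith
  have harg : x * y / t / 4 = x * y / (4*t) := by rw [div_div, mul_comm t 4]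
  unfold utilde Fker
  rw [harg]
  simp only [show ∀ k:ℕ, (k:ℝ) + (a-1)/2 + 1 = (k:ℝ) + ((a-1)/2+1) from fun k => by ring,
             show ∀ k:ℕ, (k:ℝ) - (a-1)/2 + 1 = (k:ℝ) + (1-(a-1)/2) from fun k => by ring]
  have hsum1 : Summable (fun k : ℕ =>
      (x*y/(4*t))^(2*k) / ((k.factorial:ℝ) * Real.Gamma ((k:ℝ) + ((a-1)/2+1)))) :=
    summable_ser _ _
  have hsum2 : Summable (fun k : ℕ =>
      (x*y/(4*t))^(2*k) / ((k.factorial:ℝ) * Real.Gamma ((k:ℝ) + (1-(a-1)/2)))) :=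
    summable_ser _ _
  have hW : x*y/(4*t) * |x*y/(4*t)|^(-a) * |y|^a = x/(4*t) * |x/(4*t)|^(-a) * y := by
    have h1 : x*y/(4*t) = x/(4*t) * y := by ring
    rw [h1, abs_mul, Real.mul_rpow (abs_nonneg _) (abs_nonneg _)]
    have h2 : |y| ^ (-a) * |y| ^ a = 1 := by
      rw [← Real.rpow_add (abs_pos.mpr hy)]
      simp
    calc x/(4*t) * y * (|x/(4*t)|^(-a) * |y|^(-a)) * |y|^a
        = x/(4*t) * |x/(4*t)|^(-a) * y * (|y|^(-a) * |y|^a) := by ring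
      _ = x/(4*t) * |x/(4*t)|^(-a) * y := by rw [h2, mul_one]
  have hE : Real.exp (-(x-y)^2/(4*t)) * Real.exp (-(x*y/t)/2)
      = Real.exp (-x^2/(4*t)) * Real.exp (-y^2/(4*t)) := by
    rw [← Real.exp_add, ← Real.exp_add]
    congr 1
    field_simp
    ring
  have hphik : ∀ k : ℕ, phiAux a x t k y =
      (x*y/(4*t))^(2*k) / ((k.factorial:ℝ) * Real.Gamma ((k:ℝ) + ((a-1)/2+1)))
        * ((4*t)^(-(a+1)/2) * (Real.exp (-x^2/(4*t)) * Real.exp (-y^2/(4*t))) * |y|^a)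
      + (x*y/(4*t))^(2*k) / ((k.factorial:ℝ) * Real.Gamma ((k:ℝ) + (1-(a-1)/2)))
        * ((4*t)^(-(a+1)/2) * (Real.exp (-x^2/(4*t)) * Real.exp (-y^2/(4*t)))
            * (x/(4*t) * |x/(4*t)|^(-a) * y)) := by
    intro k; unfold phiAux; ring
  rw [tsum_congr hphik, Summable.tsum_add (hsum1.mul_right _) (hsum2.mul_right _),
      tsum_mul_right, tsum_mul_right]
  linear_combination
    ((4*t)^(-(a+1)/2) * (∑' k : ℕ,
        (x*y/(4*t))^(2*k) / ((k.factorial:ℝ) * Real.Gamma ((k:ℝ) + ((a-1)/2+1)))) * |y|^a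
     + (4*t)^(-(a+1)/2) * (x*y/(4*t) * |x*y/(4*t)|^(-a)) * (∑' k : ℕ,
        (x*y/(4*t))^(2*k) / ((k.factorial:ℝ) * Real.Gamma ((k:ℝ) + (1-(a-1)/2)))) * |y|^a) * hE
    + ((4*t)^(-(a+1)/2) * (Real.exp (-x^2/(4*t)) * Real.exp (-y^2/(4*t))) * (∑' k : ℕ,
        (x*y/(4*t))^(2*k) / ((k.factorial:ℝ) * Real.Gamma ((k:ℝ) + (1-(a-1)/2))))) * hW


end AuxLemmas

/-- Total mass identity: for `a > -1`, `x ∈ ℝ` and `t > 0`,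
`∫_ℝ ũ(x,y,t) |y|^a dy = 1`. -/
theorem utilde_total_mass (a : ℝ) (ha : -1 < a) (x t : ℝ) (ht : 0 < t) :
    ∫ y : ℝ, utilde a x y t * |y| ^ a = 1 := by
  have hae : (fun y : ℝ => utilde a x y t * |y|^a)
      =ᵐ[volume] (fun y : ℝ => ∑' k : ℕ, phiAux a x t k y) := by
    filter_upwards [ae_ne_zero'] with y hy
    exact phi_pointwise ha ht hy
  rw [integral_congr_ae hae,
    integral_tsum (fun k => phi_meas a x t k) (phi_lintegral_ne_top ha ht),
    phi_tsum_integral ha ht]
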